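/- Let M be a symmetric positive semidefinite d×d real matrix, let λmax be its largest eigenvalue and λmin⁺ its smallest nonzero eigenvalue, and let x* ∈ ℝ^d. Let (z_k)_{k≥0} be generated by the deterministic heavy ball recursion z_{k+1} = z_k − ω M (z_k − x*) + β(z_k − z_{k−1}), started from z0, z1 with z0 − x* and z1 − x* in Range(M). If 0 < ω ≤ 1/λmax and (1 − sqrt(ω λmin⁺))² < β < 1, then there exists a constant C > 0 such that for all k ≥ 0, ‖z_k − x*‖² ≤ β^k C. -/

import Mathlib

open Matrix


lemma shb_zero (p q : ℝ) (a : ℕ → ℝ) (h0 : a 0 = 0) (h1 : a 1 = 0)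
    (hrec : ∀ k, 1 ≤ k → a (k+1) = p * a k - q * a (k-1)) : ∀ k, a k = 0 := by
  have key : ∀ k, a k = 0 ∧ a (k+1) = 0 := by
    intro k
    induction k with
    | zero => exact ⟨h0, h1⟩
    | succ n ih =>
      refine ⟨ih.2, ?_⟩
      have h := hrec (n+1) (by omega)
      simp only [Nat.add_sub_cancel] at h
      rw [h, ih.1, ih.2]; ring
  exact fun k => (key k).1

lemma shb_Q (p β : ℝ) (a : ℕ → ℝ)
    (hrec : ∀ k, 1 ≤ k → a (k+1) = p * a k - β * a (k-1)) :
    ∀ k, (a (k+1))^2 - p * a (k+1) * a k + β * (a k)^2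
      = β ^ k * ((a 1)^2 - p * a 1 * a 0 + β * (a 0)^2) := by
  intro k
  induction k with
  | zero => ring
  | succ n ih =>
    have h := hrec (n+1) (by omega)
    simp only [Nat.add_sub_cancel] at h
    rw [h, pow_succ]
    linear_combination β * ih

lemma shb_bound (p β : ℝ) (hβ : 0 < β) (hp : p^2 < 4*β) (a : ℕ → ℝ)
    (hrec : ∀ k, 1 ≤ k → a (k+1) = p * a k - β * a (k-1)) :
    ∀ k, (a k)^2 ≤ β ^ k *
      (((a 1)^2 - p * a 1 * a 0 + β * (a 0)^2) / (β - p^2/4)) := by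
  intro k
  have hden : 0 < β - p^2/4 := by nlinarith
  have hQ := shb_Q p β a hrec k
  have hQk : (β - p^2/4) * (a k)^2 ≤ (a (k+1))^2 - p * a (k+1) * a k + β * (a k)^2 := by
    nlinarith [sq_nonneg (a (k+1) - p/2 * a k)]
  rw [← mul_div_assoc, le_div_iff₀ hden]
  nlinarith [hQ, hQk]

/-- Let `M` be a symmetric positive semidefinite `d×d` real matrix, let
`λmax` be its largest eigenvalue and `λmin⁺` its smallest nonzero eigenvalue, and let
`x* ∈ ℝ^d`.  Let `(z_k)` be generated by the deterministic heavy ball recursion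
`z (k+1) = z k − ω M (z k − x*) + β (z k − z (k-1))`, started from `z 0, z 1` with
`z 0 − x*` and `z 1 − x*` in `Range M`.  If `0 < ω ≤ 1/λmax` and
`(1 − sqrt(ω λmin⁺))² < β < 1`, then there exists a constant `C > 0` such that for all
`k ≥ 0`, `‖z k − x*‖² ≤ β ^ k * C`. -/
theorem deterministic_heavy_ball_accelerated {d : ℕ}
    (M : Matrix (Fin d) (Fin d) ℝ) (hM : M.PosSemidef)
    (lmax lmin : ℝ)
    -- `lmax` is the largest eigenvalue of `M`:
    (hlmax_eig : ∃ v : Fin d → ℝ, v ≠ 0 ∧ M *ᵥ v = lmax • v)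
    (hlmax_max : ∀ lam : ℝ, (∃ v : Fin d → ℝ, v ≠ 0 ∧ M *ᵥ v = lam • v) → lam ≤ lmax)
    -- `lmin` is the smallest nonzero eigenvalue of `M`:
    (hlmin_pos : 0 < lmin)
    (hlmin_eig : ∃ v : Fin d → ℝ, v ≠ 0 ∧ M *ᵥ v = lmin • v)
    (hlmin_min : ∀ lam : ℝ, (∃ v : Fin d → ℝ, v ≠ 0 ∧ M *ᵥ v = lam • v) →
      lam = 0 ∨ lmin ≤ lam)
    (xstar : Fin d → ℝ)
    (ω β : ℝ) (hω0 : 0 < ω) (hω : ω ≤ 1 / lmax)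
    (hβlow : (1 - Real.sqrt (ω * lmin)) ^ 2 < β) (hβhigh : β < 1)
    (z : ℕ → (Fin d → ℝ))
    (hz0 : ∃ u, z 0 - xstar = M *ᵥ u)
    (hz1 : ∃ u, z 1 - xstar = M *ᵥ u)
    (hrec : ∀ k, 1 ≤ k →
      z (k + 1) = z k - ω • (M *ᵥ (z k - xstar)) + β • (z k - z (k - 1))) :
    ∃ C : ℝ, 0 < C ∧ ∀ k : ℕ,
      (z k - xstar) ⬝ᵥ (z k - xstar) ≤ β ^ k * C := by
  classical
  have hA : M.IsHermitian := hM.1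
  have hMT : Mᵀ = M := by
    have := hA.eq
    exact (Matrix.conjTranspose_eq_transpose_of_trivial M).symm.trans this
  set b := hA.eigenvectorBasis with hbdef
  set μ := hA.eigenvalues with hμdef
  set e : ℕ → (Fin d → ℝ) := fun k => z k - xstar with hedef
  -- recursion for e
  have herec : ∀ k, 1 ≤ k →
      e (k+1) = e k - ω • (M *ᵥ e k) + β • (e k - e (k-1)) := by
    intro k hk
    ext j
    simp only [hedef, hrec k hk, Pi.add_apply, Pi.sub_apply, Pi.smul_apply, smul_eq_mul]
    ring
  have hbe : ∀ i, M *ᵥ ⇑(b i) = μ i • ⇑(b i) := fun i => hA.mulVec_eigenvectorBasis i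
  -- key dot product lemma
  have hdotM : ∀ (i : Fin d) (w : Fin d → ℝ),
      ⇑(b i) ⬝ᵥ (M *ᵥ w) = μ i * (⇑(b i) ⬝ᵥ w) := by
    intro i w
    have h1 : ⇑(b i) ᵥ* M = μ i • ⇑(b i) := by
      conv_lhs => rw [← hMT]
      rw [vecMul_transpose, hbe i]
    rw [dotProduct_mulVec, h1, smul_dotProduct, smul_eq_mul]
  -- coordinates
  set c : ℕ → Fin d → ℝ := fun k i => ⇑(b i) ⬝ᵥ e k with hcdef
  set p : Fin d → ℝ := fun i => 1 + β - ω * μ i with hpdef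
  have hcrec : ∀ i, ∀ k, 1 ≤ k → c (k+1) i = p i * c k i - β * c (k-1) i := by
    intro i k hk
    simp only [hcdef, herec k hk, dotProduct_add, dotProduct_sub, dotProduct_smul,
      smul_eq_mul, hdotM, hpdef]
    ring
  -- basic positivity
  have hβ0 : 0 < β := lt_of_le_of_lt (sq_nonneg _) hβlow
  have hlmax0 : 0 < lmax := lt_of_lt_of_le hlmin_pos (hlmax_max lmin hlmin_eig)
  -- eigenvalue facts
  have hbne : ∀ i, (⇑(b i) : Fin d → ℝ) ≠ 0 := by
    intro i h
    exact b.orthonormal.ne_zero i (by ext j; exact congrFun h j)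
  have hμrange : ∀ i, μ i = 0 ∨ (lmin ≤ μ i ∧ μ i ≤ lmax) := by
    intro i
    rcases hlmin_min (μ i) ⟨⇑(b i), hbne i, hbe i⟩ with h | h
    · exact Or.inl h
    · exact Or.inr ⟨h, hlmax_max (μ i) ⟨⇑(b i), hbne i, hbe i⟩⟩
  -- p bound for nonzero eigenvalues
  have hpbound : ∀ i, μ i ≠ 0 → (p i)^2 < 4*β := by
    intro i h0
    rcases hμrange i with h | ⟨h1, h2⟩
    · exact absurd h h0
    have hs : Real.sqrt β < 1 := by
      rw [show (1:ℝ) = Real.sqrt 1 by simp]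
      exact Real.sqrt_lt_sqrt hβ0.le hβhigh
    have hs0 : 0 < Real.sqrt β := Real.sqrt_pos.mpr hβ0
    have hsq : Real.sqrt β ^ 2 = β := Real.sq_sqrt hβ0.le
    have hr0 : 0 ≤ Real.sqrt (ω * lmin) := Real.sqrt_nonneg _
    have hrsq : Real.sqrt (ω * lmin) ^ 2 = ω * lmin :=
      Real.sq_sqrt (by positivity)
    -- √β > 1 - √(ω lmin)
    have h3 : 1 - Real.sqrt β < Real.sqrt (ω * lmin) := by
      by_contra hcon
      push_neg at hcon
      nlinarith
    -- ω μ i > (1 - √β)^2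
    have h4 : (1 - Real.sqrt β)^2 < ω * μ i := by
      have hle : ω * lmin ≤ ω * μ i := by nlinarith
      nlinarith
    -- ω μ i ≤ 1
    have h5 : ω * μ i ≤ 1 := by
      have h6 : ω * lmax ≤ 1 := by
        rw [le_div_iff₀ hlmax0] at hω; linarith
      nlinarith
    simp only [hpdef]
    nlinarith
  -- zero eigenvalue coordinates vanish
  have hczero : ∀ i, μ i = 0 → ∀ k, c k i = 0 := by
    intro i h0
    have hc0 : c 0 i = 0 := by
      obtain ⟨u, hu⟩ := hz0
      have : e 0 = M *ᵥ u := hu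
      simp only [hcdef, this, hdotM, h0, zero_mul]
    have hc1 : c 1 i = 0 := by
      obtain ⟨u, hu⟩ := hz1
      have : e 1 = M *ᵥ u := hu
      simp only [hcdef, this, hdotM, h0, zero_mul]
    exact shb_zero (p i) β (fun k => c k i) hc0 hc1 (hcrec i)
  -- the constant per coordinate
  set D : Fin d → ℝ := fun i => if μ i = 0 then 0 else
    ((c 1 i)^2 - p i * c 1 i * c 0 i + β * (c 0 i)^2) / (β - (p i)^2/4) with hDdef
  have hckey : ∀ i k, (c k i)^2 ≤ β ^ k * D i := by
    intro i k
    by_cases h0 : μ i = 0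
    · simp [hDdef, h0, hczero i h0 k]
    · simp only [hDdef, if_neg h0]
      exact shb_bound (p i) β hβ0 (hpbound i h0) (fun k => c k i) (hcrec i) k
  have hDnn : ∀ i, 0 ≤ D i := by
    intro i
    have := hckey i 0
    simp only [pow_zero, one_mul] at this
    exact le_trans (sq_nonneg _) this
  have hDsum : 0 ≤ ∑ i, D i := Finset.sum_nonneg (fun i _ => hDnn i)
  refine ⟨∑ i, D i + 1, by linarith, ?_⟩
  intro k
  -- Parseval
  have hinner : ∀ (v : EuclideanSpace ℝ (Fin d)) (w : Fin d → ℝ),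
      (inner ℝ v ((WithLp.equiv 2 _).symm w) : ℝ) = (WithLp.equiv 2 _) v ⬝ᵥ w := by
    intro v w
    rw [EuclideanSpace.inner_eq_star_dotProduct]
    simp [dotProduct_comm]
  have hpar : e k ⬝ᵥ e k = ∑ i, (c k i)^2 := by
    have hx := b.sum_inner_mul_inner ((WithLp.equiv 2 _).symm (e k))
      ((WithLp.equiv 2 _).symm (e k))
    have hxx : (inner ℝ ((WithLp.equiv 2 _).symm (e k) : EuclideanSpace ℝ (Fin d))
        ((WithLp.equiv 2 _).symm (e k)) : ℝ) = e k ⬝ᵥ e k := by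
      rw [WithLp.equiv_symm_apply, EuclideanSpace.inner_toLp_toLp]
      simp [dotProduct_comm]
    rw [hxx] at hx
    rw [← hx]
    apply Finset.sum_congr rfl
    intro i _
    have hcval : (inner ℝ ((WithLp.equiv 2 _).symm (e k) : EuclideanSpace ℝ (Fin d)) (b i) : ℝ)
        = c k i := by
      simp only [hcdef]
      rw [real_inner_comm]
      exact hinner (b i) (e k)
    rw [hcval]
    have hcval2 : (inner ℝ (b i) ((WithLp.equiv 2 _).symm (e k) : EuclideanSpace ℝ (Fin d)) : ℝ)
        = c k i := by
      simp only [hcdef]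
      exact hinner (b i) (e k)
    rw [hcval2]
    ring
  have hβk : 0 < β ^ k := pow_pos hβ0 k
  calc (z k - xstar) ⬝ᵥ (z k - xstar) = ∑ i, (c k i)^2 := hpar
    _ ≤ ∑ i, β ^ k * D i := Finset.sum_le_sum (fun i _ => hckey i k)
    _ = β ^ k * ∑ i, D i := by rw [Finset.mul_sum]
    _ ≤ β ^ k * (∑ i, D i + 1) := by nlinarith
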